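/- Fix the shared-seed coordinated sampling setup and a function f : V → ℝ_{≥0} admitting a nonnegative unbiased estimator. For every v ∈ V and every ρ ∈ (0, 1/4], the v-optimal estimates f̂^{(v)}(u) = −dH_f^{(v)}(u)/du satisfy ∫_{ρ/2}^{4ρ} f̂^{(v)}(u) du ≥ (1/2) · ( f̲^{(v)}(ρ) − f̲^{(v)}(4ρ) ). -/

import Mathlib

open MeasureTheory Set Filter Topology

noncomputable section

/-- A shared-seed coordinated sampling scheme on a data domain `V ⊆ ℝ_{≥0}^r`:
continuous non-decreasing seed-to-threshold maps `τ i : [0,1] → ℝ` whose range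
infimum is at most the infimum of the `i`-th coordinate over the domain. -/
structure CoordScheme (r : ℕ) where
  V : Set (Fin r → ℝ)
  τ : Fin r → ℝ → ℝ
  V_nonneg : ∀ v ∈ V, ∀ i, 0 ≤ v i
  τ_cont : ∀ i, ContinuousOn (τ i) (Set.Icc 0 1)
  τ_mono : ∀ i, MonotoneOn (τ i) (Set.Icc 0 1)
  τ_inf : ∀ i, sInf (τ i '' Set.Icc 0 1) ≤ sInf ((fun v => v i) '' V)

namespace CoordScheme

variable {r : ℕ}

/-- The set `S(u,v)` of sampled entries: `i` is sampled iff `v i ≥ τ i u`. -/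
def sampled (C : CoordScheme r) (u : ℝ) (v : Fin r → ℝ) : Set (Fin r) :=
  {i | C.τ i u ≤ v i}

/-- The consistent set `V*(u,v)` of data vectors consistent with the outcome `S(u,v)`. -/
def Vstar (C : CoordScheme r) (u : ℝ) (v : Fin r → ℝ) : Set (Fin r → ℝ) :=
  {z ∈ C.V | ∀ i, (C.τ i u ≤ v i → z i = v i) ∧ (v i < C.τ i u → z i < C.τ i u)}

/-- The lower bound function `f̲(u,v) = inf { f z : z ∈ V*(u,v) }`. -/
def lb (C : CoordScheme r) (f : (Fin r → ℝ) → ℝ) (u : ℝ) (v : Fin r → ℝ) : ℝ :=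
  sInf (f '' C.Vstar u v)

/-- An estimator: an integrable function of the outcome (it takes equal values on
data vectors consistent with the same outcome). -/
structure IsEstimator (C : CoordScheme r) (fhat : ℝ → (Fin r → ℝ) → ℝ) : Prop where
  integrable : ∀ v ∈ C.V, IntegrableOn (fun u => fhat u v) (Set.Ioc (0:ℝ) 1)
  consistent : ∀ u ∈ Set.Ioc (0:ℝ) 1, ∀ v ∈ C.V, ∀ z ∈ C.Vstar u v, fhat u v = fhat u z

/-- A nonnegative estimator. -/
def Nonneg (C : CoordScheme r) (fhat : ℝ → (Fin r → ℝ) → ℝ) : Prop :=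
  ∀ u ∈ Set.Ioc (0:ℝ) 1, ∀ v ∈ C.V, 0 ≤ fhat u v

/-- An unbiased estimator of `f`. -/
def Unbiased (C : CoordScheme r) (f : (Fin r → ℝ) → ℝ)
    (fhat : ℝ → (Fin r → ℝ) → ℝ) : Prop :=
  ∀ v ∈ C.V, (∫ u in Set.Ioc (0:ℝ) 1, fhat u v) = f v

end CoordScheme

/-- Lower convex hull of `g` on `(0,1]`: the pointwise largest convex function
bounded above by `g` there. -/
def lowerHull (g : ℝ → ℝ) (u : ℝ) : ℝ :=
  sSup {y : ℝ | ∃ h : ℝ → ℝ, ConvexOn ℝ (Set.Ioc (0:ℝ) 1) h ∧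
      (∀ x ∈ Set.Ioc (0:ℝ) 1, h x ≤ g x) ∧ y = h u}

namespace CoordScheme

variable {r : ℕ}

/-- The `v`-optimal estimates: the negated derivative of the lower hull of the
lower-bound function `u ↦ f̲(u,v)`. -/
def optEst (C : CoordScheme r) (f : (Fin r → ℝ) → ℝ) (v : Fin r → ℝ) (u : ℝ) : ℝ :=
  -deriv (lowerHull (fun x => C.lb f x v)) u

/-- Cumulative integral `∫_{2^{-j}}^1` of the J estimator (by its defining recursion):
`Jint (j+1) = Jint j + (value on `(2^{-j-1},2^{-j}]`) ⬝ 2^{-j-1}`. -/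
def Jint (C : CoordScheme r) (f : (Fin r → ℝ) → ℝ) (v : Fin r → ℝ) : ℕ → ℝ
  | 0 => 0
  | (j+1) => Jint C f v j +
      ((2:ℝ) ^ (j+1) * (C.lb f ((2:ℝ) ^ (-(j:ℤ))) v - Jint C f v j)) * (2:ℝ) ^ (-(j:ℤ) - 1)

/-- The (constant) value of the J estimator on the dyadic interval `(2^{-j-1}, 2^{-j}]`.
For `j = 0` this is `2 ⬝ f̲(1,v)`; for `j ≥ 1` it is
`2^{j+1} ⬝ ( f̲(2^{-j},v) − ∫_{2^{-j}}^1 f̂⁽ᴶ⁾(x,v) dx )`. -/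
def Jval (C : CoordScheme r) (f : (Fin r → ℝ) → ℝ) (v : Fin r → ℝ) (j : ℕ) : ℝ :=
  (2:ℝ) ^ (j+1) * (C.lb f ((2:ℝ) ^ (-(j:ℤ))) v - Jint C f v j)

/-- The J estimator `f̂⁽ᴶ⁾(u,v)`: on `u ∈ (2^{-j-1}, 2^{-j}]` it takes the value `Jval j`. -/
def Jest (C : CoordScheme r) (f : (Fin r → ℝ) → ℝ) (u : ℝ) (v : Fin r → ℝ) : ℝ :=
  C.Jval f v ⌊-Real.logb 2 u⌋₊

end CoordScheme


/-! ### Auxiliary lemmas -/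

namespace CoordScheme

variable {r : ℕ}

lemma self_mem_Vstar (C : CoordScheme r) {v : Fin r → ℝ} (hv : v ∈ C.V) (u : ℝ) :
    v ∈ C.Vstar u v :=
  ⟨hv, fun _ => ⟨fun _ => rfl, fun h => h⟩⟩

lemma lb_nonneg (C : CoordScheme r) {f : (Fin r → ℝ) → ℝ} (hf : ∀ z ∈ C.V, 0 ≤ f z)
    (u : ℝ) (v : Fin r → ℝ) : 0 ≤ C.lb f u v := by
  apply Real.sInf_nonneg
  rintro y ⟨z, hz, rfl⟩
  exact hf z hz.1

lemma Vstar_mono (C : CoordScheme r) (v : Fin r → ℝ) {u u' : ℝ}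
    (hu : u ∈ Set.Ioc (0:ℝ) 1) (hu' : u' ∈ Set.Ioc (0:ℝ) 1) (huu' : u ≤ u') :
    C.Vstar u v ⊆ C.Vstar u' v := by
  rintro z ⟨hzV, hz⟩
  have hτ : ∀ i, C.τ i u ≤ C.τ i u' := fun i =>
    C.τ_mono i ⟨hu.1.le, hu.2⟩ ⟨hu'.1.le, hu'.2⟩ huu'
  refine ⟨hzV, fun i => ⟨?_, ?_⟩⟩
  · intro h
    exact (hz i).1 (le_trans (hτ i) h)
  · intro h
    rcases lt_or_ge (v i) (C.τ i u) with h2 | h2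
    · exact lt_of_lt_of_le ((hz i).2 h2) (hτ i)
    · rw [(hz i).1 h2]; exact h

lemma lb_antitoneOn (C : CoordScheme r) {f : (Fin r → ℝ) → ℝ} {v : Fin r → ℝ}
    (hv : v ∈ C.V) (hf : ∀ z ∈ C.V, 0 ≤ f z) :
    AntitoneOn (fun u => C.lb f u v) (Set.Ioc (0:ℝ) 1) := by
  intro u hu u' hu' huu'
  apply csInf_le_csInf
  · exact ⟨0, by rintro y ⟨z, hz, rfl⟩; exact hf z hz.1⟩
  · exact ⟨f v, ⟨v, C.self_mem_Vstar hv u, rfl⟩⟩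
  · exact Set.image_mono (C.Vstar_mono v hu hu' huu')

end CoordScheme

namespace HullAux



variable {g : ℝ → ℝ}

def hullSet (g : ℝ → ℝ) (u : ℝ) : Set ℝ :=
  {y : ℝ | ∃ h : ℝ → ℝ, ConvexOn ℝ (Set.Ioc (0:ℝ) 1) h ∧
      (∀ x ∈ Set.Ioc (0:ℝ) 1, h x ≤ g x) ∧ y = h u}

lemma lowerHull_eq (u : ℝ) : lowerHull g u = sSup (hullSet g u) := rfl

lemma zero_mem_hullSet (hg0 : ∀ x ∈ Set.Ioc (0:ℝ) 1, 0 ≤ g x) (u : ℝ) :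
    (0:ℝ) ∈ hullSet g u :=
  ⟨fun _ => 0, convexOn_const 0 (convex_Ioc 0 1), fun x hx => hg0 x hx, rfl⟩

lemma bddAbove_hullSet {u : ℝ} (hu : u ∈ Set.Ioc (0:ℝ) 1) : BddAbove (hullSet g u) := by
  refine ⟨g u, ?_⟩
  rintro y ⟨h, _, hle, rfl⟩
  exact hle u hu

lemma le_lowerHull {h : ℝ → ℝ} (hc : ConvexOn ℝ (Set.Ioc (0:ℝ) 1) h)
    (hle : ∀ x ∈ Set.Ioc (0:ℝ) 1, h x ≤ g x) {u : ℝ} (hu : u ∈ Set.Ioc (0:ℝ) 1) :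
    h u ≤ lowerHull g u :=
  le_csSup (bddAbove_hullSet hu) ⟨h, hc, hle, rfl⟩

lemma lowerHull_le (hg0 : ∀ x ∈ Set.Ioc (0:ℝ) 1, 0 ≤ g x) {u : ℝ}
    (hu : u ∈ Set.Ioc (0:ℝ) 1) : lowerHull g u ≤ g u := by
  refine csSup_le ⟨0, zero_mem_hullSet hg0 u⟩ ?_
  rintro y ⟨h, _, hle, rfl⟩
  exact hle u hu

lemma lowerHull_nonneg (hg0 : ∀ x ∈ Set.Ioc (0:ℝ) 1, 0 ≤ g x) {u : ℝ}
    (hu : u ∈ Set.Ioc (0:ℝ) 1) : 0 ≤ lowerHull g u :=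
  le_csSup (bddAbove_hullSet hu) (zero_mem_hullSet hg0 u)

lemma lowerHull_convexOn (hg0 : ∀ x ∈ Set.Ioc (0:ℝ) 1, 0 ≤ g x) :
    ConvexOn ℝ (Set.Ioc (0:ℝ) 1) (lowerHull g) := by
  refine ⟨convex_Ioc 0 1, fun x hx y hy a b ha hb hab => ?_⟩
  have hz : a • x + b • y ∈ Set.Ioc (0:ℝ) 1 := (convex_Ioc 0 1) hx hy ha hb hab
  refine csSup_le ⟨0, zero_mem_hullSet hg0 _⟩ ?_
  rintro w ⟨h, hc, hle, rfl⟩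
  calc h (a • x + b • y) ≤ a • h x + b • h y := hc.2 hx hy ha hb hab
    _ ≤ a • lowerHull g x + b • lowerHull g y := by
        have h1 : h x ≤ lowerHull g x := le_lowerHull hc hle hx
        have h2 : h y ≤ lowerHull g y := le_lowerHull hc hle hy
        simp only [smul_eq_mul]
        gcongr

lemma lowerHull_antitoneOn (hg0 : ∀ x ∈ Set.Ioc (0:ℝ) 1, 0 ≤ g x)
    (hga : AntitoneOn g (Set.Ioc (0:ℝ) 1)) :
    AntitoneOn (lowerHull g) (Set.Ioc (0:ℝ) 1) := by
  set F := lowerHull g with hF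
  have hFc := lowerHull_convexOn hg0
  intro p hp q hq hpq
  rcases eq_or_lt_of_le hpq with rfl | hpq
  · exact le_rfl
  by_contra hlt
  push_neg at hlt
  -- step : for x > q in Ioc, F q ≤ F x
  have step : ∀ x ∈ Set.Ioc (0:ℝ) 1, q < x → F q ≤ F x := by
    intro x hx hqx
    by_contra hFx
    push_neg at hFx
    have hlam : q = ((x - q)/(x - p)) • p + ((q - p)/(x - p)) • x := by
      have : x - p ≠ 0 := by linarith
      simp only [smul_eq_mul]
      field_simp
      ring
    have h1 : (0:ℝ) ≤ (x - q)/(x - p) := div_nonneg (by linarith) (by linarith)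
    have h2 : (0:ℝ) ≤ (q - p)/(x - p) := div_nonneg (by linarith) (by linarith)
    have h3 : (x - q)/(x - p) + (q - p)/(x - p) = 1 := by
      have : x - p ≠ 0 := by linarith
      field_simp
      ring
    have := hFc.2 hp hx h1 h2 h3
    rw [← hlam] at this
    have h4 : (0:ℝ) < (x - q)/(x - p) := div_pos (by linarith) (by linarith)
    have h5 : (0:ℝ) < (q - p)/(x - p) := div_pos (by linarith) (by linarith)
    simp only [smul_eq_mul] at this
    rw [hF] at hlt hFx
    have h6 : (x - q)/(x - p) * lowerHull g q + (q - p)/(x - p) * lowerHull g q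
        = lowerHull g q := by rw [← add_mul, h3, one_mul]
    nlinarith [mul_lt_mul_of_pos_left hlt h4, mul_lt_mul_of_pos_left hFx h5]
  -- the minorant max (F x) (F q)
  have hmin : ∀ x ∈ Set.Ioc (0:ℝ) 1, max (F x) (F q) ≤ g x := by
    intro x hx
    refine max_le (lowerHull_le hg0 hx) ?_
    rcases le_or_gt x q with h | h
    · exact (lowerHull_le hg0 hq).trans (hga hx hq h)
    · exact (step x hx h).trans (lowerHull_le hg0 hx)
  have hconv : ConvexOn ℝ (Set.Ioc (0:ℝ) 1) (fun x => max (F x) (F q)) :=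
    hFc.sup (convexOn_const _ (convex_Ioc 0 1))
  have := le_lowerHull hconv hmin hp
  simp only [← hF] at this
  have : F q ≤ F p := le_trans (le_max_right _ _) this
  linarith

lemma lowerHull_line_le {g : ℝ → ℝ} (hg0 : ∀ x ∈ Set.Ioc (0:ℝ) 1, 0 ≤ g x)
    (hga : AntitoneOn g (Set.Ioc (0:ℝ) 1)) {t : ℝ} (ht : t ∈ Set.Ioc (0:ℝ) 1) :
    ∀ x ∈ Set.Ioc (0:ℝ) 1, x ≤ t →
      g t + (lowerHull g t - g t) / t * x ≤ lowerHull g x := by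
  have hFc := lowerHull_convexOn (g := g) hg0
  have ht0 : (0:ℝ) < t := ht.1
  set c := (lowerHull g t - g t) / t with hcdef
  set n : ℝ → ℝ := fun x => g t + c * x with hndef
  set q : ℝ → ℝ := fun x => if x ≤ t then max (lowerHull g x) (n x) else lowerHull g x
    with hqdef
  have hnt : n t = lowerHull g t := by
    simp only [hndef, hcdef]
    field_simp
    ring
  have hc0 : c ≤ 0 := by
    apply div_nonpos_of_nonpos_of_nonneg _ (le_of_lt ht0)
    have := lowerHull_le hg0 ht
    linarith
  have hFq : ∀ w, lowerHull g w ≤ q w := by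
    intro w
    by_cases h : w ≤ t <;> simp [hqdef, h]
  have hnq : ∀ w, w ≤ t → n w ≤ q w := by
    intro w h
    simp [hqdef, h]
  have hqy : ∀ w, t < w → q w = lowerHull g w := by
    intro w h
    simp [hqdef, not_le.mpr h]
  have hqg : ∀ w ∈ Set.Ioc (0:ℝ) 1, q w ≤ g w := by
    intro w hw
    by_cases h : w ≤ t
    · simp only [hqdef, if_pos h]
      refine max_le (lowerHull_le hg0 hw) ?_
      have h1 : n w ≤ g t := by
        simp only [hndef]
        nlinarith [mul_nonpos_of_nonpos_of_nonneg hc0 (le_of_lt hw.1)]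
      exact h1.trans (hga hw ht h)
    · simp only [hqdef, if_neg h]
      exact lowerHull_le hg0 hw
  -- key convexity inequality, assuming x ≤ y
  have key : ∀ x ∈ Set.Ioc (0:ℝ) 1, ∀ y ∈ Set.Ioc (0:ℝ) 1, x ≤ y → ∀ a b : ℝ,
      0 ≤ a → 0 ≤ b → a + b = 1 → q (a * x + b * y) ≤ a * q x + b * q y := by
    intro x hx y hy hxy a b ha hb hab
    have hzmem : a * x + b * y ∈ Set.Ioc (0:ℝ) 1 := by
      have := (convex_Ioc (0:ℝ) 1) hx hy ha hb hab
      simpa using this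
    have habx : (a + b - 1) * x = 0 := by rw [hab]; ring
    have haby : (a + b - 1) * y = 0 := by rw [hab]; ring
    have hxz : x ≤ a * x + b * y := by
      nlinarith [mul_nonneg hb (sub_nonneg.mpr hxy)]
    have hzy : a * x + b * y ≤ y := by
      nlinarith [mul_nonneg ha (sub_nonneg.mpr hxy)]
    have hFz : lowerHull g (a * x + b * y) ≤ a * q x + b * q y := by
      have h1 : lowerHull g (a * x + b * y) ≤ a * lowerHull g x + b * lowerHull g y := by
        have := hFc.2 hx hy ha hb hab
        simpa using this
      have h2 : a * lowerHull g x ≤ a * q x := mul_le_mul_of_nonneg_left (hFq x) ha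
      have h3 : b * lowerHull g y ≤ b * q y := mul_le_mul_of_nonneg_left (hFq y) hb
      linarith
    by_cases hzt : a * x + b * y ≤ t
    · rw [hqdef]
      simp only [if_pos hzt]
      refine max_le hFz ?_
      by_cases hyt : y ≤ t
      · -- all three points ≤ t : use affinity of n
        have hnz : n (a * x + b * y) = a * n x + b * n y := by
          simp only [hndef]
          linear_combination (-(g t)) * hab
        have h2 : a * n x ≤ a * q x := mul_le_mul_of_nonneg_left (hnq x (hxy.trans hyt)) ha
        have h3 : b * n y ≤ b * q y := mul_le_mul_of_nonneg_left (hnq y hyt) hb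
        linarith
      · push_neg at hyt
        by_cases hb0 : b = 0
        · have ha1 : a = 1 := by linarith
          have hzx : a * x + b * y = x := by rw [ha1, hb0]; ring
          rw [hzx, ha1, hb0]
          have := hnq x (hzx ▸ hzt)
          linarith
        · have hbpos : 0 < b := lt_of_le_of_ne hb (Ne.symm hb0)
          have hxy' : x < y := lt_of_le_of_lt (hxz.trans hzt) hyt
          have hxltz : x < a * x + b * y := by
            nlinarith [mul_pos hbpos (sub_pos.mpr hxy')]
          have hxt' : x < t := lt_of_lt_of_le hxltz hzt
          have htx : t - x ≠ 0 := by intro h; rw [sub_eq_zero] at h; linarith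
          have hyx : y - x ≠ 0 := by intro h; rw [sub_eq_zero] at h; linarith
          set z := a * x + b * y with hzdef
          set μ := (t - z) / (t - x) with hmudef
          set lam := (y - t) / (y - x) with hlamdef
          have hmu0 : 0 ≤ μ := div_nonneg (by linarith) (by linarith)
          have hmu1 : μ ≤ 1 := by
            rw [hmudef, div_le_one (by linarith : (0:ℝ) < t - x)]
            linarith
          have hlam0 : 0 ≤ lam := div_nonneg (by linarith) (by linarith)
          have hlam1 : lam ≤ 1 := by
            rw [hlamdef, div_le_one (by linarith : (0:ℝ) < y - x)]
            linarith
          have hteq : lam * x + (1 - lam) * y = t := by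
            rw [hlamdef]
            field_simp
            ring
          have hFt : lowerHull g t ≤ lam * lowerHull g x + (1 - lam) * lowerHull g y := by
            have h := hFc.2 hx hy hlam0 (by linarith : (0:ℝ) ≤ 1 - lam) (by ring)
            simp only [smul_eq_mul] at h
            rwa [hteq] at h
          have hnz : n z = μ * n x + (1 - μ) * lowerHull g t := by
            rw [← hnt]
            simp only [hndef, hmudef]
            field_simp
            ring
          have hzx : z - x = b * (y - x) := by
            rw [hzdef]
            linear_combination x * hab
          have h1m : 1 - μ = (z - x) / (t - x) := by
            rw [hmudef]
            field_simp
            ring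
          have h1l : 1 - lam = (t - x) / (y - x) := by
            rw [hlamdef]
            field_simp
            ring
          have hbeq : (1 - μ) * (1 - lam) = b := by
            rw [h1m, h1l, div_mul_div_comm, mul_comm (t - x) (y - x),
              mul_div_mul_right _ _ htx, div_eq_iff hyx, hzx]
          have haeq : μ + (1 - μ) * lam = a := by
            linear_combination (-1 : ℝ) * hab - hbeq
          have i1 : μ * n x ≤ μ * q x := mul_le_mul_of_nonneg_left (hnq x hxt'.le) hmu0
          have i2 : (1 - μ) * lowerHull g t
              ≤ (1 - μ) * (lam * lowerHull g x + (1 - lam) * lowerHull g y) :=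
            mul_le_mul_of_nonneg_left hFt (by linarith)
          have i3 : lam * lowerHull g x ≤ lam * q x :=
            mul_le_mul_of_nonneg_left (hFq x) hlam0
          have i4 : (1 - lam) * lowerHull g y ≤ (1 - lam) * q y :=
            mul_le_mul_of_nonneg_left (hFq y) (by linarith)
          have i5 : (1 - μ) * (lam * lowerHull g x + (1 - lam) * lowerHull g y)
              ≤ (1 - μ) * (lam * q x + (1 - lam) * q y) :=
            mul_le_mul_of_nonneg_left (by linarith) (by linarith)
          have efin : μ * q x + (1 - μ) * (lam * q x + (1 - lam) * q y)
              = a * q x + b * q y := by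
            linear_combination (q x) * haeq + (q y) * hbeq
          linarith [hnz, i1, i2, i5, efin]
    · push_neg at hzt
      rw [hqy _ hzt]
      exact hFz
  have hqc : ConvexOn ℝ (Set.Ioc (0:ℝ) 1) q := by
    refine ⟨convex_Ioc 0 1, fun x hx y hy a b ha hb hab => ?_⟩
    simp only [smul_eq_mul]
    rcases le_total x y with h | h
    · exact key x hx y hy h a b ha hb hab
    · rw [add_comm (a*x) (b*y), add_comm (a * q x) (b * q y)]
      exact key y hy x hx h b a hb ha (by linarith)
  intro x hx hxt
  have h1 : n x ≤ q x := hnq x hxt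
  have h2 : q x ≤ lowerHull g x := le_lowerHull hqc hqg hx
  calc g t + (lowerHull g t - g t) / t * x = n x := by rw [hndef]
    _ ≤ lowerHull g x := h1.trans h2

section Deriv

variable {F : ℝ → ℝ}

/-- upper bound on the derivative of a convex function via slopes to the right -/
lemma deriv_le_of_slope (hFc : ConvexOn ℝ (Set.Ioc (0:ℝ) 1) F) {u w C : ℝ}
    (hu : u ∈ Set.Ioo (0:ℝ) 1) (hw : w ∈ Set.Ioc (0:ℝ) 1) (huw : u < w)
    (hdiff : DifferentiableAt ℝ F u)
    (hC : ∀ v, u < v → v < w → (F w - F v) / (w - v) ≤ C) :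
    deriv F u ≤ C := by
  have hder := hdiff.hasDerivAt
  rw [hasDerivAt_iff_tendsto_slope] at hder
  have htend : Tendsto (slope F u) (𝓝[>] u) (𝓝 (deriv F u)) :=
    hder.mono_left (nhdsWithin_mono _ fun v hv => ne_of_gt hv)
  refine le_of_tendsto htend ?_
  filter_upwards [Ioo_mem_nhdsGT_of_mem (⟨le_refl u, huw⟩ : u ∈ Set.Ico u w)] with v hv
  have humem : u ∈ Set.Ioc (0:ℝ) 1 := ⟨hu.1, hu.2.le⟩
  have h3 := hFc.slope_mono_adjacent humem hw hv.1 hv.2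
  rw [slope_def_field]
  exact h3.trans (hC v hv.1 hv.2)

/-- lower bound on the derivative of a convex function via slopes to the left -/
lemma slope_le_deriv (hFc : ConvexOn ℝ (Set.Ioc (0:ℝ) 1) F) {p q u : ℝ}
    (hp : p ∈ Set.Ioc (0:ℝ) 1) (hu : u ∈ Set.Ioc (0:ℝ) 1) (hpq : p < q) (hqu : q < u)
    (hdiff : DifferentiableAt ℝ F u) :
    (F q - F p) / (q - p) ≤ deriv F u := by
  have hder := hdiff.hasDerivAt
  rw [hasDerivAt_iff_tendsto_slope] at hder
  have htend : Tendsto (slope F u) (𝓝[<] u) (𝓝 (deriv F u)) :=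
    hder.mono_left (nhdsWithin_mono _ fun v hv => ne_of_lt hv)
  refine ge_of_tendsto htend ?_
  filter_upwards [Ioo_mem_nhdsLT_of_mem (⟨hqu, le_refl u⟩ : u ∈ Set.Ioc q u)] with v hv
  have hq1 : q ∈ Set.Ioc (0:ℝ) 1 := ⟨hp.1.trans hpq, (hqu.trans_le hu.2).le⟩
  have hv1 : v ∈ Set.Ioc (0:ℝ) 1 := ⟨hq1.1.trans hv.1, (hv.2.trans_le hu.2).le⟩
  have h1 := hFc.slope_mono_adjacent hp hv1 hpq hv.1
  have h2 := hFc.slope_mono_adjacent hq1 hu hv.1 hv.2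
  rw [slope_comm, slope_def_field]
  calc (F q - F p) / (q - p) ≤ (F v - F q) / (v - q) := h1
    _ ≤ (F u - F v) / (u - v) := h2

end Deriv

lemma hull_integral_ge {g : ℝ → ℝ} (hg0 : ∀ x ∈ Set.Ioc (0:ℝ) 1, 0 ≤ g x)
    (hga : AntitoneOn g (Set.Ioc (0:ℝ) 1)) {ρ : ℝ} (hρ : ρ ∈ Set.Ioc (0:ℝ) (1/4)) :
    (1/2) * (g ρ - g (4 * ρ)) ≤ ∫ u in Set.Ioc (ρ/2) (4*ρ), -deriv (lowerHull g) u := by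
  obtain ⟨hρ0, hρ4⟩ := hρ
  have hb1 : 4 * ρ ≤ 1 := by linarith
  have hmem_t : ρ ∈ Set.Ioc (0:ℝ) 1 := ⟨hρ0, by linarith⟩
  have hmem_b : 4 * ρ ∈ Set.Ioc (0:ℝ) 1 := ⟨by linarith, hb1⟩
  have hmem_a : ρ/2 ∈ Set.Ioc (0:ℝ) 1 := ⟨by linarith, by linarith⟩
  have hmem_a0 : ρ/4 ∈ Set.Ioc (0:ℝ) 1 := ⟨by linarith, by linarith⟩
  have hFc : ConvexOn ℝ (Set.Ioc (0:ℝ) 1) (lowerHull g) := lowerHull_convexOn hg0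
  have hFa : AntitoneOn (lowerHull g) (Set.Ioc (0:ℝ) 1) := lowerHull_antitoneOn hg0 hga
  -- a.e. differentiability on Ioo (ρ/4) 1
  have hclmono : Monotone (fun x : ℝ => max (ρ/4) (min x 1)) :=
    monotone_const.max (monotone_id.min monotone_const)
  have hclmem : ∀ x : ℝ, max (ρ/4) (min x 1) ∈ Set.Ioc (0:ℝ) 1 := by
    intro x
    constructor
    · exact lt_of_lt_of_le hmem_a0.1 (le_max_left _ _)
    · exact max_le hmem_a0.2 (min_le_right _ _)
  have hFclmono : Monotone (fun x : ℝ => -(lowerHull g (max (ρ/4) (min x 1)))) := by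
    intro p q hpq
    simp only [neg_le_neg_iff]
    exact hFa (hclmem p) (hclmem q) (hclmono hpq)
  have hae : ∀ᵐ u : ℝ, DifferentiableAt ℝ (fun x : ℝ => -(lowerHull g (max (ρ/4) (min x 1)))) u :=
    hFclmono.ae_differentiableAt
  have hdiffF : ∀ᵐ u : ℝ, u ∈ Set.Ioo (ρ/4) 1 → DifferentiableAt ℝ (lowerHull g) u := by
    filter_upwards [hae] with u hu hmem
    have h1 : DifferentiableAt ℝ (fun x : ℝ => lowerHull g (max (ρ/4) (min x 1))) u := by
      have := hu.neg
      simpa using this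
    have heq : (fun x : ℝ => lowerHull g (max (ρ/4) (min x 1))) =ᶠ[𝓝 u] lowerHull g := by
      filter_upwards [Ioo_mem_nhds hmem.1 hmem.2] with x hx
      rw [min_eq_left hx.2.le, max_eq_right hx.1.le]
    exact heq.symm.differentiableAt_iff.mpr h1
  -- nonpositivity of the derivative
  have hderiv_nonpos : ∀ u ∈ Set.Ioo (0:ℝ) 1, DifferentiableAt ℝ (lowerHull g) u →
      deriv (lowerHull g) u ≤ 0 := by
    intro u hu hd
    refine deriv_le_of_slope hFc hu ⟨zero_lt_one, le_refl 1⟩ hu.2 hd ?_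
    intro v huv hv1
    apply div_nonpos_of_nonpos_of_nonneg _ (by linarith)
    have : lowerHull g 1 ≤ lowerHull g v :=
      hFa ⟨hu.1.trans huv, hv1.le⟩ ⟨zero_lt_one, le_refl 1⟩ hv1.le
    linarith
  -- uniform bound on the derivative on Ioo (ρ/2) (4ρ)
  set B : ℝ := (lowerHull g (ρ/4) - lowerHull g (ρ/2)) / (ρ/2 - ρ/4) with hBdef
  have hB0 : 0 ≤ B := by
    apply div_nonneg _ (by linarith)
    have := hFa hmem_a0 hmem_a (by linarith)
    linarith
  have hbd : ∀ u ∈ Set.Ioo (ρ/2) (4*ρ), DifferentiableAt ℝ (lowerHull g) u →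
      ‖-deriv (lowerHull g) u‖ ≤ B := by
    intro u hu hd
    have hu01 : u ∈ Set.Ioo (0:ℝ) 1 := ⟨by linarith [hu.1], lt_of_lt_of_le hu.2 hb1⟩
    have h1 : deriv (lowerHull g) u ≤ 0 := hderiv_nonpos u hu01 hd
    have h2 : (lowerHull g (ρ/2) - lowerHull g (ρ/4)) / (ρ/2 - ρ/4) ≤ deriv (lowerHull g) u :=
      slope_le_deriv hFc hmem_a0 ⟨hu01.1, hu01.2.le⟩ (by linarith) hu.1 hd
    rw [Real.norm_eq_abs, abs_le]
    constructor
    · linarith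
    · have : -B ≤ deriv (lowerHull g) u := by
        rw [hBdef]
        rw [← neg_div, neg_sub]
        exact h2
      linarith
  -- integrability
  have hint : IntegrableOn (fun u => -deriv (lowerHull g) u) (Set.Ioc (ρ/2) (4*ρ)) volume := by
    refine Integrable.mono' (g := fun _ => B)
      ((integrableOn_const_iff).mpr (Or.inr measure_Ioc_lt_top))
      ((measurable_deriv (lowerHull g)).neg).aestronglyMeasurable ?_
    rw [← Measure.restrict_congr_set Ioo_ae_eq_Ioc]
    filter_upwards [ae_restrict_mem measurableSet_Ioo, ae_restrict_of_ae hdiffF]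
      with u hu hdf
    exact hbd u hu (hdf ⟨by linarith [hu.1], lt_of_lt_of_le hu.2 hb1⟩)
  -- generic piece bound
  have piece : ∀ α β C : ℝ, ρ/2 ≤ α → α ≤ β → β ≤ 4*ρ →
      (∀ u, u ∈ Set.Ioo α β → DifferentiableAt ℝ (lowerHull g) u → C ≤ -deriv (lowerHull g) u) →
      C * (β - α) ≤ ∫ u in Set.Ioc α β, -deriv (lowerHull g) u := by
    intro α β C hα hαβ hβ hC
    have hint' : IntegrableOn (fun u => -deriv (lowerHull g) u) (Set.Ioo α β) :=
      hint.mono_set ((Set.Ioo_subset_Ioc_self).trans (Set.Ioc_subset_Ioc hα hβ))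
    have hconst : IntegrableOn (fun _ : ℝ => C) (Set.Ioo α β) :=
      (integrableOn_const_iff).mpr (Or.inr measure_Ioo_lt_top)
    have heq : volume.restrict (Set.Ioo α β) = volume.restrict (Set.Ioc α β) :=
      Measure.restrict_congr_set Ioo_ae_eq_Ioc
    have h1 : (∫ _u in Set.Ioo α β, C) ≤ ∫ u in Set.Ioo α β, -deriv (lowerHull g) u := by
      refine setIntegral_mono_on_ae hconst hint' measurableSet_Ioo ?_
      filter_upwards [hdiffF] with u hdf hu
      exact hC u hu (hdf ⟨by linarith [hu.1], by linarith [hu.2]⟩)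
    have h2 : (∫ _u in Set.Ioo α β, C) = C * (β - α) := by
      rw [setIntegral_const, Real.volume_real_Ioo_of_le (by linarith), smul_eq_mul,
        mul_comm]
    have h3 : (∫ u in Set.Ioo α β, -deriv (lowerHull g) u)
        = ∫ u in Set.Ioc α β, -deriv (lowerHull g) u := by
      rw [heq]
    linarith [h1, h2.symm.trans_le h1]
  -- FTC-type lower bound on Ioc ρ (4ρ) via partitions
  have hEn : ∀ n : ℕ, lowerHull g (ρ + (3*ρ)/(n+1)) - lowerHull g (4*ρ)
      ≤ ∫ u in Set.Ioc ρ (4*ρ), -deriv (lowerHull g) u := by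
    intro n
    set N : ℕ := n + 1 with hNdef
    have hNpos : (0:ℝ) < N := by positivity
    set Δ : ℝ := (3*ρ)/N with hΔdef
    have hΔpos : 0 < Δ := by positivity
    set x : ℕ → ℝ := fun j => ρ + j * Δ with hxdef
    have hx0 : x 0 = ρ := by simp [hxdef]
    have hxN : x N = 4*ρ := by
      simp only [hxdef, hΔdef]
      field_simp
      ring
    have hxsucc : ∀ j : ℕ, x (j+1) = x j + Δ := by
      intro j
      simp only [hxdef]
      push_cast
      ring
    have hxmono : ∀ i j : ℕ, i ≤ j → x i ≤ x j := by
      intro i j hij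
      simp only [hxdef]
      have : (i:ℝ) ≤ j := Nat.cast_le.mpr hij
      nlinarith
    have hxmem : ∀ j : ℕ, j ≤ N → x j ∈ Set.Ioc (0:ℝ) 1 := by
      intro j hj
      constructor
      · have : (0:ℝ) ≤ j * Δ := by positivity
        simp only [hxdef]; linarith
      · have := hxmono j N hj
        rw [hxN] at this
        linarith
    clear_value x Δ N
    -- per-piece bound
    have hp : ∀ j : ℕ, j + 2 ≤ N →
        lowerHull g (x (j+1)) - lowerHull g (x (j+2))
          ≤ ∫ u in Set.Ioc (x j) (x (j+1)), -deriv (lowerHull g) u := by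
      intro j hj
      have hj1 : j + 1 ≤ N := by omega
      have hx1 : x j < x (j+1) := by rw [hxsucc]; linarith
      have hx2 : x (j+1) < x (j+2) := by rw [hxsucc (j+1)]; linarith
      have harg1 : ρ/2 ≤ x j := by
        have h := hxmono 0 j (Nat.zero_le j)
        rw [hx0] at h
        linarith
      have harg3 : x (j+1) ≤ 4*ρ := by
        have h := hxmono (j+1) N hj1
        rw [hxN] at h
        exact h
      have harg4 : ∀ u ∈ Set.Ioo (x j) (x (j+1)), DifferentiableAt ℝ (lowerHull g) u →
          (lowerHull g (x (j+1)) - lowerHull g (x (j+2)))/Δ ≤ -deriv (lowerHull g) u := by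
        intro u hu hd
        have hu01 : u ∈ Set.Ioo (0:ℝ) 1 := by
          constructor
          · have := (hxmem j (by omega)).1
            linarith [hu.1]
          · have := (hxmem (j+1) hj1).2
            have h4 := hxmono (j+1) N hj1
            rw [hxN] at h4
            linarith [hu.2, hb1]
        have hslope : deriv (lowerHull g) u
            ≤ (lowerHull g (x (j+2)) - lowerHull g (x (j+1))) / (x (j+2) - x (j+1)) := by
          refine deriv_le_of_slope hFc hu01 (hxmem (j+1) hj1) hu.2 hd ?_
          intro v huv hv
          have hv01 : v ∈ Set.Ioc (0:ℝ) 1 :=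
            ⟨hu01.1.trans huv, (hv.trans_le (hxmem (j+1) hj1).2).le⟩
          exact hFc.slope_mono_adjacent hv01 (hxmem (j+2) hj) hv hx2
        have hΔeq : x (j+2) - x (j+1) = Δ := by rw [hxsucc (j+1)]; ring
        rw [hΔeq] at hslope
        have : -((lowerHull g (x (j+2)) - lowerHull g (x (j+1))) / Δ)
            ≤ -deriv (lowerHull g) u := by linarith
        calc (lowerHull g (x (j+1)) - lowerHull g (x (j+2)))/Δ
            = -((lowerHull g (x (j+2)) - lowerHull g (x (j+1))) / Δ) := by ring
          _ ≤ -deriv (lowerHull g) u := this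
      have hCinst := piece (x j) (x (j+1))
        ((lowerHull g (x (j+1)) - lowerHull g (x (j+2)))/Δ) harg1 hx1.le harg3 harg4
      have hΔeq : x (j+1) - x j = Δ := by rw [hxsucc]; ring
      rw [hΔeq, div_mul_cancel₀ _ hΔpos.ne'] at hCinst
      exact hCinst
    -- telescoping
    have htel : ∀ m : ℕ, m + 1 ≤ N →
        lowerHull g (x 1) - lowerHull g (x (m+1))
          ≤ ∫ u in Set.Ioc (x 0) (x m), -deriv (lowerHull g) u := by
      intro m
      induction m with
      | zero =>
        intro _
        simp [Set.Ioc_self]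
      | succ m ih =>
        intro hm
        have ihm := ih (by omega)
        have hpm := hp m hm
        have hsplit : (∫ u in Set.Ioc (x 0) (x (m+1)), -deriv (lowerHull g) u)
            = (∫ u in Set.Ioc (x 0) (x m), -deriv (lowerHull g) u)
              + ∫ u in Set.Ioc (x m) (x (m+1)), -deriv (lowerHull g) u := by
          rw [← Set.Ioc_union_Ioc_eq_Ioc (hxmono 0 m (Nat.zero_le m)) (hxmono m (m+1) (by omega))]
          refine setIntegral_union (Set.Ioc_disjoint_Ioc_of_le le_rfl) measurableSet_Ioc ?_ ?_
          · refine hint.mono_set (Set.Ioc_subset_Ioc ?_ ?_)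
            · rw [hx0]; linarith
            · have := hxmono m N (by omega); rw [hxN] at this; exact this
          · refine hint.mono_set (Set.Ioc_subset_Ioc ?_ ?_)
            · have := hxmono 0 m (Nat.zero_le m); rw [hx0] at this; linarith
            · have := hxmono (m+1) N (by omega); rw [hxN] at this; exact this
        rw [hsplit]
        linarith
    -- last piece is nonnegative
    have hlast : 0 ≤ ∫ u in Set.Ioc (x n) (x N), -deriv (lowerHull g) u := by
      have harg1 : ρ/2 ≤ x n := by
        have h := hxmono 0 n (Nat.zero_le n)
        rw [hx0] at h
        linarith
      have harg4 : ∀ u ∈ Set.Ioo (x n) (x N), DifferentiableAt ℝ (lowerHull g) u →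
          (0:ℝ) ≤ -deriv (lowerHull g) u := by
        intro u hu hd
        have hu01 : u ∈ Set.Ioo (0:ℝ) 1 := by
          constructor
          · have := (hxmem n (by omega)).1; linarith [hu.1]
          · rw [hxN] at hu
            linarith [hu.2, hb1]
        have := hderiv_nonpos u hu01 hd
        linarith
      have h0 := piece (x n) (x N) 0 harg1 (hxmono n N (by omega)) (le_of_eq hxN) harg4
      linarith [h0]
    -- combine
    have hsplit2 : (∫ u in Set.Ioc ρ (4*ρ), -deriv (lowerHull g) u)
        = (∫ u in Set.Ioc (x 0) (x n), -deriv (lowerHull g) u)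
          + ∫ u in Set.Ioc (x n) (x N), -deriv (lowerHull g) u := by
      have hseteq : Set.Ioc ρ (4*ρ) = Set.Ioc (x 0) (x N) := by rw [hx0, hxN]
      rw [hseteq, ← Set.Ioc_union_Ioc_eq_Ioc (hxmono 0 n (Nat.zero_le n)) (hxmono n N (by omega))]
      refine setIntegral_union (Set.Ioc_disjoint_Ioc_of_le le_rfl) measurableSet_Ioc ?_ ?_
      · refine hint.mono_set (Set.Ioc_subset_Ioc (by rw [hx0]; linarith) ?_)
        have := hxmono n N (by omega); rw [hxN] at this; exact this
      · refine hint.mono_set (Set.Ioc_subset_Ioc ?_ (le_of_eq hxN))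
        have := hxmono 0 n (Nat.zero_le n); rw [hx0] at this; linarith
    have htel' := htel n (by omega)
    have hx1eq : x 1 = ρ + (3*ρ)/(N:ℝ) := by
      simp only [hxdef, hΔdef]
      push_cast
      ring
    rw [hsplit2]
    rw [hx1eq] at htel'
    have : (((n:ℝ)) + 1) = (N:ℝ) := by push_cast [hNdef]; ring
    rw [← this] at htel'
    have hxn1 : x (n + 1) = 4*ρ := by rw [← hNdef]; exact hxN
    rw [hxn1] at htel'
    linarith [htel', hlast]
  -- limit n → ∞ in hEn
  have hseq : Tendsto (fun n : ℕ => ρ + (3*ρ)/(n+1)) atTop (𝓝 ρ) := by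
    have h1 : Tendsto (fun n : ℕ => (3*ρ)/((n:ℝ)+1)) atTop (𝓝 0) := by
      have h2 := tendsto_const_div_atTop_nhds_zero_nat (3*ρ)
      have h3 := h2.comp (tendsto_add_atTop_nat 1)
      have h4 : ((fun n : ℕ => 3*ρ/(n:ℝ)) ∘ fun n : ℕ => n + 1)
          = fun n : ℕ => (3*ρ)/((n:ℝ)+1) := by
        funext n
        simp [Function.comp]
      rwa [h4] at h3
    have h5 := (tendsto_const_nhds (x := ρ) (f := atTop (α := ℕ))).add h1
    simpa using h5
  have hcontF : ContinuousOn (lowerHull g) (Set.Ioo (0:ℝ) 1) :=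
    (hFc.subset Set.Ioo_subset_Ioc_self (convex_Ioo 0 1)).continuousOn isOpen_Ioo
  have hFseq : Tendsto (fun n : ℕ => lowerHull g (ρ + (3*ρ)/(n+1))) atTop
      (𝓝 (lowerHull g ρ)) := by
    have hmem : ∀ᶠ n : ℕ in atTop, (ρ + (3*ρ)/((n:ℝ)+1)) ∈ Set.Ioo (0:ℝ) 1 := by
      filter_upwards [Filter.eventually_ge_atTop 1] with n hn
      have hn2 : (2:ℝ) ≤ (n:ℝ) + 1 := by
        have : (1:ℝ) ≤ (n:ℝ) := by exact_mod_cast hn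
        linarith
      have hd : (3*ρ)/((n:ℝ)+1) ≤ (3*ρ)/2 :=
        div_le_div_of_nonneg_left (by linarith) (by norm_num) hn2
      constructor
      · have : (0:ℝ) < (3*ρ)/((n:ℝ)+1) := by positivity
        linarith
      · linarith
    have htendW : Tendsto (fun n : ℕ => ρ + (3*ρ)/((n:ℝ)+1)) atTop (𝓝[Set.Ioo (0:ℝ) 1] ρ) :=
      tendsto_nhdsWithin_of_tendsto_nhds_of_eventually_within _ hseq hmem
    exact (hcontF ρ ⟨hρ0, by linarith⟩).tendsto.comp htendW
  have hE : lowerHull g ρ - lowerHull g (4*ρ) ≤ ∫ u in Set.Ioc ρ (4*ρ), -deriv (lowerHull g) u :=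
    le_of_tendsto (hFseq.sub_const (lowerHull g (4*ρ))) (Filter.Eventually.of_forall hEn)
  -- first piece (ρ/2, ρ]
  have hP1 : (g ρ - lowerHull g ρ)/2 ≤ ∫ u in Set.Ioc (ρ/2) ρ, -deriv (lowerHull g) u := by
    have hk : (g ρ - lowerHull g ρ)/ρ * (ρ - ρ/2) = (g ρ - lowerHull g ρ)/2 := by
      field_simp
      ring
    rw [← hk]
    refine piece (ρ/2) ρ _ (le_refl _) (by linarith) (by linarith) ?_
    intro u hu hd
    have hu01 : u ∈ Set.Ioo (0:ℝ) 1 := ⟨by linarith [hu.1], by linarith [hu.2]⟩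
    have hkρ : (lowerHull g ρ - g ρ)/ρ * ρ = lowerHull g ρ - g ρ := div_mul_cancel₀ _ hρ0.ne'
    have hslope : deriv (lowerHull g) u ≤ (lowerHull g ρ - g ρ)/ρ := by
      refine deriv_le_of_slope hFc hu01 hmem_t hu.2 hd ?_
      intro v huv hv
      have hv01 : v ∈ Set.Ioc (0:ℝ) 1 := ⟨hu01.1.trans huv, by linarith⟩
      have hline := lowerHull_line_le hg0 hga hmem_t v hv01 hv.le
      rw [div_le_iff₀ (by linarith : (0:ℝ) < ρ - v)]
      nlinarith [hline, hkρ]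
    have hflip : -((lowerHull g ρ - g ρ)/ρ) = (g ρ - lowerHull g ρ)/ρ := by ring
    linarith [hslope, hflip]
  -- combine the two pieces
  have hsplitf : (∫ u in Set.Ioc (ρ/2) (4*ρ), -deriv (lowerHull g) u)
      = (∫ u in Set.Ioc (ρ/2) ρ, -deriv (lowerHull g) u)
        + ∫ u in Set.Ioc ρ (4*ρ), -deriv (lowerHull g) u := by
    rw [← Set.Ioc_union_Ioc_eq_Ioc (by linarith : ρ/2 ≤ ρ) (by linarith : ρ ≤ 4*ρ)]
    exact setIntegral_union (Set.Ioc_disjoint_Ioc_of_le le_rfl) measurableSet_Ioc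
      (hint.mono_set (Set.Ioc_subset_Ioc le_rfl (by linarith)))
      (hint.mono_set (Set.Ioc_subset_Ioc (by linarith) le_rfl))
  have hF4g : lowerHull g (4*ρ) ≤ g (4*ρ) := lowerHull_le hg0 hmem_b
  have hFmono : lowerHull g (4*ρ) ≤ lowerHull g ρ := hFa hmem_t hmem_b (by linarith)
  rw [hsplitf]
  linarith [hP1, hE, hF4g, hFmono]

end HullAux

/-- for every `v ∈ V` and `ρ ∈ (0, 1/4]`, the `v`-optimal estimates
satisfy `∫_{ρ/2}^{4ρ} f̂⁽ᵛ⁾(u) du ≥ (1/2) ⬝ ( f̲⁽ᵛ⁾(ρ) − f̲⁽ᵛ⁾(4ρ) )`. -/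
theorem stmt16 {r : ℕ} (C : CoordScheme r) (f : (Fin r → ℝ) → ℝ)
    (hf : ∀ v ∈ C.V, 0 ≤ f v)
    (hex : ∃ g, C.IsEstimator g ∧ C.Nonneg g ∧ C.Unbiased f g)
    (v : Fin r → ℝ) (hv : v ∈ C.V) (ρ : ℝ) (hρ : ρ ∈ Set.Ioc (0:ℝ) (1/4)) :
    (1/2) * (C.lb f ρ v - C.lb f (4 * ρ) v) ≤
      ∫ u in Set.Ioc (ρ/2) (4 * ρ), C.optEst f v u := by
  have hg0 : ∀ x ∈ Set.Ioc (0:ℝ) 1, 0 ≤ (fun u => C.lb f u v) x :=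
    fun x _ => C.lb_nonneg hf x v
  have hga : AntitoneOn (fun u => C.lb f u v) (Set.Ioc (0:ℝ) 1) := C.lb_antitoneOn hv hf
  have h := HullAux.hull_integral_ge hg0 hga hρ
  simpa [CoordScheme.optEst] using h
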